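/- Let P and Q be probability measures on a measurable space and let S be a measurable set with Z := Q(S) ≥ 1/2. Define the conditioned measure Q̃ by Q̃(A) = Q(A ∩ S)/Z for all measurable A. Then KL(Q̃‖P) ≤ 2 · KL(Q‖P) + 2 · log 2. -/

import Mathlib

open MeasureTheory

noncomputable section

/-- Gibbs-type lower bound on a set: `∫_T log(dQ/dP) dQ ≥ Q(T) log Q(T)`. -/
lemma setIntegral_llr_ge {Ω : Type*} [MeasurableSpace Ω] (P Q : Measure Ω)
    [IsProbabilityMeasure P] [IsProbabilityMeasure Q]
    (hQP : Q ≪ P) (hint : Integrable (fun w => Real.log ((Q.rnDeriv P w).toReal)) Q)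
    (T : Set Ω) (hT : MeasurableSet T) :
    (Q T).toReal * Real.log ((Q T).toReal)
      ≤ ∫ w in T, Real.log ((Q.rnDeriv P w).toReal) ∂Q := by
  by_cases hQT : Q T = 0
  · simp [Measure.restrict_eq_zero.mpr hQT, hQT]
  have hPT : P T ≠ 0 := fun h => hQT (hQP h)
  set y := (Q T).toReal with hy
  set p := (P T).toReal with hp
  have hy0 : 0 < y := ENNReal.toReal_pos hQT (measure_ne_top _ _)
  have hp0 : 0 < p := ENNReal.toReal_pos hPT (measure_ne_top _ _)
  have hp1 : p ≤ 1 := by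
    have := prob_le_one (μ := P) (s := T)
    simpa [hp] using ENNReal.toReal_mono (by simp) this
  -- a.e. facts
  have hgpos : ∀ᵐ w ∂Q, 0 < P.rnDeriv Q w := Measure.rnDeriv_pos' hQP
  have hglt : ∀ᵐ w ∂Q, P.rnDeriv Q w < ⊤ := Measure.rnDeriv_lt_top P Q
  have hinv : (Q.rnDeriv P)⁻¹ =ᵐ[Q] P.rnDeriv Q := Measure.inv_rnDeriv hQP
  -- pointwise: log g + log (y/p) ≤ g * (y/p) - 1
  have hptwise : ∀ᵐ w ∂Q,
      Real.log ((P.rnDeriv Q w).toReal) + Real.log (y / p)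
        ≤ (P.rnDeriv Q w).toReal * (y / p) - 1 := by
    filter_upwards [hgpos, hglt] with w h0 h1
    have hg0 : 0 < (P.rnDeriv Q w).toReal := ENNReal.toReal_pos h0.ne' h1.ne
    have := Real.log_le_sub_one_of_pos (mul_pos hg0 (div_pos hy0 hp0))
    rwa [Real.log_mul hg0.ne' (div_pos hy0 hp0).ne'] at this
  have hlogg : (fun w => Real.log ((P.rnDeriv Q w).toReal))
      =ᵐ[Q] fun w => - Real.log ((Q.rnDeriv P w).toReal) := by
    filter_upwards [hinv] with w hw
    rw [← Real.log_inv, ← ENNReal.toReal_inv, ← hw, Pi.inv_apply]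
  have hint_logg : Integrable (fun w => Real.log ((P.rnDeriv Q w).toReal)) Q :=
    hint.neg.congr hlogg.symm
  have hint_g : Integrable (fun w => (P.rnDeriv Q w).toReal) Q :=
    Measure.integrable_toReal_rnDeriv
  -- integrate over T
  have hmono : ∫ w in T, (Real.log ((P.rnDeriv Q w).toReal) + Real.log (y / p)) ∂Q
      ≤ ∫ w in T, ((P.rnDeriv Q w).toReal * (y / p) - 1) ∂Q := by
    refine integral_mono_ae ?_ ?_ (ae_restrict_of_ae hptwise)
    · exact (hint_logg.add (integrable_const _)).restrict
    · exact ((hint_g.mul_const _).sub (integrable_const _)).restrict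
  have hTlt : Q T ≠ ⊤ := measure_ne_top _ _
  rw [integral_add hint_logg.restrict (integrable_const _),
    integral_sub (hint_g.mul_const _).restrict (integrable_const _),
    setIntegral_const, setIntegral_const, integral_mul_const,
    smul_eq_mul, smul_eq_mul, measureReal_def, ← hy] at hmono
  have hgle : ∫ w in T, (P.rnDeriv Q w).toReal ∂Q ≤ p :=
    Measure.setIntegral_toReal_rnDeriv_le (measure_ne_top _ _)
  have hgy : (∫ w in T, (P.rnDeriv Q w).toReal ∂Q) * (y / p) ≤ y := by
    calc (∫ w in T, (P.rnDeriv Q w).toReal ∂Q) * (y / p)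
        ≤ p * (y / p) := mul_le_mul_of_nonneg_right hgle (div_nonneg hy0.le hp0.le)
      _ = y := by field_simp
  have h1 : ∫ w in T, Real.log ((P.rnDeriv Q w).toReal) ∂Q ≤ - (y * Real.log (y / p)) := by
    linarith
  have h2 : ∫ w in T, Real.log ((P.rnDeriv Q w).toReal) ∂Q
      = - ∫ w in T, Real.log ((Q.rnDeriv P w).toReal) ∂Q := by
    rw [← integral_neg]
    exact integral_congr_ae (ae_restrict_of_ae hlogg)
  rw [h2] at h1
  have h3 : y * Real.log (y / p) ≤ ∫ w in T, Real.log ((Q.rnDeriv P w).toReal) ∂Q := by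
    linarith
  refine le_trans ?_ h3
  rw [Real.log_div hy0.ne' hp0.ne']
  have : Real.log p ≤ 0 := Real.log_nonpos hp0.le hp1
  nlinarith


/-- Real-valued Kullback–Leibler divergence `∫ log (dQ/dP) dQ`. -/
def klDivReal {W : Type*} [MeasurableSpace W] (Q P : Measure W) : ℝ :=
  ∫ w, Real.log ((Q.rnDeriv P w).toReal) ∂Q

/-- If `Z = Q(S) ≥ 1/2` and `Q̃` is `Q` conditioned on `S`, i.e.
`Q̃(A) = Q(A ∩ S)/Z`, then `KL(Q̃‖P) ≤ 2 KL(Q‖P) + 2 log 2`. -/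
theorem klDiv_cond_le (Ω : Type*) [MeasurableSpace Ω] (P Q : Measure Ω)
    [IsProbabilityMeasure P] [IsProbabilityMeasure Q]
    (hQP : Q ≪ P) (hint : Integrable (fun w => Real.log ((Q.rnDeriv P w).toReal)) Q)
    (S : Set Ω) (hS : MeasurableSet S) (hZ : (1 : ℝ) / 2 ≤ (Q S).toReal) :
    klDivReal ((Q S)⁻¹ • Q.restrict S) P ≤ 2 * klDivReal Q P + 2 * Real.log 2 := by
  set Z := (Q S).toReal with hZdef
  have hZpos : 0 < Z := lt_of_lt_of_le (by norm_num) hZ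
  have hQS0 : Q S ≠ 0 := fun h => by simp [hZdef, h] at hZpos
  have hQStop : Q S ≠ ⊤ := measure_ne_top _ _
  have hZ1 : Z ≤ 1 := by
    simpa [hZdef] using ENNReal.toReal_mono (by simp) (prob_le_one (μ := Q) (s := S))
  set Qt := (Q S)⁻¹ • Q.restrict S with hQt
  have haeQt : ae Qt = ae (Q.restrict S) := by
    rw [hQt]; exact Measure.ae_ennreal_smul_measure_eq (ENNReal.inv_ne_zero.mpr hQStop) (Q.restrict S)
  -- rnDeriv of Qt, a.e. Qt
  have hrn1 : Qt.rnDeriv P =ᵐ[P] (Q S)⁻¹ • (Q.restrict S).rnDeriv P :=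
    Measure.rnDeriv_smul_left_of_ne_top _ _ (ENNReal.inv_ne_top.mpr hQS0)
  have hrn2 : (Q.restrict S).rnDeriv P =ᵐ[P] S.indicator (Q.rnDeriv P) :=
    Measure.rnDeriv_restrict _ _ hS
  have hfpos : ∀ᵐ w ∂Q, 0 < Q.rnDeriv P w := Measure.rnDeriv_pos hQP
  have hflt : ∀ᵐ w ∂Q, Q.rnDeriv P w < ⊤ := hQP.ae_le (Measure.rnDeriv_lt_top Q P)
  -- the integrand over Qt
  have hcongr : (fun w => Real.log ((Qt.rnDeriv P w).toReal))
      =ᵐ[Qt] fun w => Real.log ((Q.rnDeriv P w).toReal) - Real.log Z := by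
    rw [haeQt]
    have h1 := ae_restrict_of_ae (hQP.ae_le hrn1) (s := S)
    have h2 := ae_restrict_of_ae (hQP.ae_le hrn2) (s := S)
    have h3 := ae_restrict_of_ae hfpos (s := S)
    have h4 := ae_restrict_of_ae hflt (s := S)
    filter_upwards [h1, h2, h3, h4, ae_restrict_mem hS] with w hw1 hw2 hw3 hw4 hwS
    rw [hw1, Pi.smul_apply, hw2, Set.indicator_of_mem hwS, smul_eq_mul,
      ENNReal.toReal_mul, ENNReal.toReal_inv,
      Real.log_mul (by positivity) (ENNReal.toReal_pos hw3.ne' hw4.ne).ne',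
      Real.log_inv]
    ring
  have hkl : klDivReal Qt P = Z⁻¹ * ∫ w in S, Real.log ((Q.rnDeriv P w).toReal) ∂Q - Real.log Z := by
    rw [klDivReal, integral_congr_ae hcongr, hQt, integral_smul_measure,
      ENNReal.toReal_inv, ← hZdef,
      integral_sub hint.restrict (integrable_const _), setIntegral_const, smul_eq_mul, smul_eq_mul]
    rw [measureReal_def, ← hZdef]
    field_simp
  -- split the full integral
  have hsplit : (∫ w in S, Real.log ((Q.rnDeriv P w).toReal) ∂Q)
      + ∫ w in Sᶜ, Real.log ((Q.rnDeriv P w).toReal) ∂Q = klDivReal Q P :=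
    integral_add_compl hS hint
  set y := (Q Sᶜ).toReal with hydef
  have hcompl : y = 1 - Z := by
    rw [hydef, hZdef, measure_compl hS (measure_ne_top _ _), measure_univ,
      ENNReal.toReal_sub_of_le (prob_le_one) (by simp), ENNReal.toReal_one]
  have hSc : y * Real.log y ≤ ∫ w in Sᶜ, Real.log ((Q.rnDeriv P w).toReal) ∂Q :=
    setIntegral_llr_ge P Q hQP hint Sᶜ hS.compl
  have hKLnonneg : 0 ≤ klDivReal Q P := by
    have := setIntegral_llr_ge P Q hQP hint Set.univ MeasurableSet.univ
    simpa [klDivReal, measure_univ] using this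
  have hIS : ∫ w in S, Real.log ((Q.rnDeriv P w).toReal) ∂Q
      ≤ klDivReal Q P - y * Real.log y := by linarith
  -- put it together
  have hZinv2 : Z⁻¹ ≤ 2 := by
    rw [inv_le_comm₀ hZpos (by norm_num)]
    linarith
  have hbin : - y * Real.log y - Z * Real.log Z ≤ Real.log 2 := by
    have hb := Real.binEntropy_le_log_two (p := Z)
    rw [Real.binEntropy, Real.log_inv, Real.log_inv, ← hcompl] at hb
    nlinarith [hb]
  have hbin0 : 0 ≤ - y * Real.log y - Z * Real.log Z := by
    have hy0 : 0 ≤ y := ENNReal.toReal_nonneg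
    have hy1 : y ≤ 1 := by linarith [hcompl, hZpos]
    have h1 : y * Real.log y ≤ 0 := mul_nonpos_of_nonneg_of_nonpos hy0 (Real.log_nonpos hy0 hy1)
    have h2 : Z * Real.log Z ≤ 0 := mul_nonpos_of_nonneg_of_nonpos hZpos.le (Real.log_nonpos hZpos.le hZ1)
    linarith
  calc klDivReal Qt P = Z⁻¹ * ∫ w in S, Real.log ((Q.rnDeriv P w).toReal) ∂Q - Real.log Z := hkl
    _ ≤ Z⁻¹ * (klDivReal Q P - y * Real.log y) - Real.log Z := by
        gcongr
    _ = Z⁻¹ * klDivReal Q P + Z⁻¹ * (- y * Real.log y - Z * Real.log Z) := by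
        field_simp
        ring
    _ ≤ 2 * klDivReal Q P + 2 * Real.log 2 := by
        have h1 : Z⁻¹ * klDivReal Q P ≤ 2 * klDivReal Q P :=
          mul_le_mul_of_nonneg_right hZinv2 hKLnonneg
        have h2 : Z⁻¹ * (- y * Real.log y - Z * Real.log Z) ≤ 2 * Real.log 2 := by
          calc Z⁻¹ * (- y * Real.log y - Z * Real.log Z)
              ≤ Z⁻¹ * Real.log 2 := mul_le_mul_of_nonneg_left hbin (inv_nonneg.mpr hZpos.le)
            _ ≤ 2 * Real.log 2 := mul_le_mul_of_nonneg_right hZinv2 (Real.log_nonneg (by norm_num))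
        linarith


end
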